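/- Suppose R satisfies (Z1.1), (Z1.2) and (Z3.2). Let g be an essential element of G(0) that is cyclically minimal in rank 1/2, and let x ∈ 0(g). Then (g·x)ⁿ = gⁿ in G(0). -/

import Mathlib

open scoped Classical

noncomputable section

namespace OlshanskiiSapir

/-- The number of occurrences of letters from `Y` (with either exponent `±1`)
in a word over the alphabet `X`. -/
def wordYLen {X : Type} (Y : Set X) (l : List (X × Bool)) : ℕ :=
  (l.filter fun p => decide (p.1 ∈ Y)).length

/-- The `Y`-length of an element of the free group: the minimal number of
`Y`-letters occurring in a word representing it. -/
def fYLen {X : Type} (Y : Set X) (w : FreeGroup X) : ℕ :=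
  sInf {k | ∃ l : List (X × Bool), FreeGroup.mk l = w ∧ wordYLen Y l = k}

/-- The `Y`-length of an element `g` of a group `G` marked by an epimorphism
`π : FreeGroup X →* G`: the minimal number of `Y`-letters in a word representing `g`. -/
def yLen {X G : Type} [Group G] (Y : Set X) (π : FreeGroup X →* G) (g : G) : ℕ :=
  sInf {k | ∃ l : List (X × Bool), π (FreeGroup.mk l) = g ∧ wordYLen Y l = k}

/-- Condition (Z1.1): every relator either has `Y`-length `0` or, up to cyclic
shift (i.e. up to conjugacy), has the form `a * y₁ * b * y₂⁻¹` with `y₁, y₂ ∈ Y`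
and `a`, `b` of `Y`-length `0`. -/
def Z11 {X : Type} (Y : Set X) (R : Set (FreeGroup X)) : Prop :=
  ∀ r ∈ R, fYLen Y r = 0 ∨
    ∃ a b : FreeGroup X, ∃ y₁ ∈ Y, ∃ y₂ ∈ Y,
      fYLen Y a = 0 ∧ fYLen Y b = 0 ∧
      IsConj (a * FreeGroup.of y₁ * b * (FreeGroup.of y₂)⁻¹) r

/-- An element of `G` is essential if no conjugate of it is a `0`-element
(an element of `Y`-length `0`). -/
def Essential {X G : Type} [Group G] (Y : Set X) (π : FreeGroup X →* G) (g : G) : Prop :=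
  ∀ h : G, yLen Y π (h * g * h⁻¹) ≠ 0

/-- `OSub Y π g`: the maximal subgroup consisting of `0`-elements which
contains `g` in its normalizer. -/
def OSub {X G : Type} [Group G] (Y : Set X) (π : FreeGroup X →* G) (g : G) : Subgroup G :=
  sSup {H : Subgroup G | (∀ x ∈ H, yLen Y π x = 0) ∧ g ∈ Subgroup.normalizer (H : Set G)}

section Aux

variable {X G : Type} [Group G] {Y : Set X} {π : FreeGroup X →* G}

private lemma wordYLen_append (Y : Set X) (l₁ l₂ : List (X × Bool)) :
    wordYLen Y (l₁ ++ l₂) = wordYLen Y l₁ + wordYLen Y l₂ := by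
  simp [wordYLen, List.filter_append]

private lemma wordYLen_invRev (Y : Set X) (l : List (X × Bool)) :
    wordYLen Y (FreeGroup.invRev l) = wordYLen Y l := by
  simp [wordYLen, FreeGroup.invRev, List.filter_map, Function.comp_def]

private lemma yLen_zero_of (g : G) (l : List (X × Bool))
    (h : π (FreeGroup.mk l) = g) (h0 : wordYLen Y l = 0) :
    yLen Y π g = 0 :=
  Nat.sInf_eq_zero.mpr (Or.inl ⟨l, h, h0⟩)

private lemma exists_of_yLen_zero (hs : Function.Surjective π) (g : G)
    (h : yLen Y π g = 0) :
    ∃ l, π (FreeGroup.mk l) = g ∧ wordYLen Y l = 0 := by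
  rcases Nat.sInf_eq_zero.mp h with h0 | hemp
  · exact h0
  · exfalso
    rcases hs g with ⟨w, hw⟩
    exact Set.eq_empty_iff_forall_notMem.mp hemp (wordYLen Y w.toWord)
      ⟨w.toWord, by rw [FreeGroup.mk_toWord]; exact hw, rfl⟩

private lemma yLen_one : yLen Y π (1 : G) = 0 :=
  yLen_zero_of 1 [] (by rw [← FreeGroup.one_eq_mk, map_one]) rfl

private lemma yLen_mul (hs : Function.Surjective π) {a b : G}
    (ha : yLen Y π a = 0) (hb : yLen Y π b = 0) : yLen Y π (a * b) = 0 := by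
  obtain ⟨l₁, h₁, h₁0⟩ := exists_of_yLen_zero hs a ha
  obtain ⟨l₂, h₂, h₂0⟩ := exists_of_yLen_zero hs b hb
  refine yLen_zero_of _ (l₁ ++ l₂) ?_ ?_
  · rw [← FreeGroup.mul_mk, map_mul, h₁, h₂]
  · rw [wordYLen_append, h₁0, h₂0]

private lemma yLen_inv (hs : Function.Surjective π) {a : G}
    (ha : yLen Y π a = 0) : yLen Y π a⁻¹ = 0 := by
  obtain ⟨l, h, h0⟩ := exists_of_yLen_zero hs a ha
  refine yLen_zero_of _ (FreeGroup.invRev l) ?_ ?_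
  · rw [← FreeGroup.inv_mk, map_inv, h]
  · rw [wordYLen_invRev, h0]

/-- The subgroup of `0`-elements. -/
private def zeroSub (Y : Set X) (π : FreeGroup X →* G) (hs : Function.Surjective π) :
    Subgroup G where
  carrier := {a | yLen Y π a = 0}
  one_mem' := yLen_one
  mul_mem' := fun ha hb => yLen_mul hs ha hb
  inv_mem' := fun ha => yLen_inv hs ha

private lemma yLen_zero_of_mem_OSub (hs : Function.Surjective π) (g : G)
    {x : G} (hx : x ∈ OSub Y π g) : yLen Y π x = 0 := by
  have : OSub Y π g ≤ zeroSub Y π hs := sSup_le fun H hH => fun a ha => hH.1 a ha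
  exact this hx

private lemma map_conj_eq_self {g : G} {H : Subgroup G} (hg : g ∈ Subgroup.normalizer (H : Set G)) :
    Subgroup.map (MulAut.conj g).toMonoidHom H = H := by
  ext a
  simp only [Subgroup.mem_map, MulEquiv.coe_toMonoidHom, MulAut.conj_apply]
  constructor
  · rintro ⟨y, hy, rfl⟩
    exact (Subgroup.mem_normalizer_iff.mp hg y).mp hy
  · intro ha
    exact ⟨g⁻¹ * a * g, by
      have := (Subgroup.mem_normalizer_iff.mp hg (g⁻¹ * a * g)).mpr
      simpa [mul_assoc] using this (by simpa [mul_assoc] using ha), by group⟩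

private lemma mem_normalizer_OSub (g : G) : g ∈ Subgroup.normalizer ((OSub Y π g : Subgroup G) : Set G) := by
  have hmap : Subgroup.map (MulAut.conj g).toMonoidHom (OSub Y π g) = OSub Y π g := by
    rw [OSub, (Subgroup.gc_map_comap (MulAut.conj g).toMonoidHom).l_sSup]
    apply le_antisymm
    · refine iSup₂_le fun H hH => ?_
      rw [map_conj_eq_self hH.2]
      exact le_sSup hH
    · refine sSup_le fun H hH => ?_
      have : H = Subgroup.map (MulAut.conj g).toMonoidHom H := (map_conj_eq_self hH.2).symm
      rw [this]
      exact le_iSup₂_of_le H hH le_rfl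
  rw [Subgroup.mem_normalizer_iff]
  intro h
  constructor
  · intro hh
    rw [← hmap]
    exact ⟨h, hh, rfl⟩
  · intro hh
    rw [← hmap] at hh
    obtain ⟨y, hy, hy2⟩ := hh
    simp only [MulEquiv.coe_toMonoidHom, MulAut.conj_apply] at hy2
    have : y = h := by
      have := hy2
      group at this ⊢
      exact mul_left_cancel (mul_right_cancel this)
    rwa [← this]

end Aux

/-- (Lemma `star`.) Suppose the presentation satisfies
(Z1.1), (Z1.2) and (Z3.2).  Here `G₀ = G(0)` is defined by the relators `R₀`,
and `G₁ = G(1/2)` is defined by the relators `R₀ ∪ Rh` (`Rh` being the hubs).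
If `g` is an essential element of `G(0)` which is cyclically minimal in rank
`1/2`, and `x ∈ 0(g)`, then `(g·x)ⁿ = gⁿ` in `G(0)`. -/
theorem statement10 {X G₀ G₁ : Type} [Group G₀] [Group G₁] (Y : Set X)
    (R₀ Rh : Set (FreeGroup X)) (n : ℕ) (hodd : Odd n)
    (π₀ : FreeGroup X →* G₀) (hs₀ : Function.Surjective π₀)
    (hk₀ : π₀.ker = Subgroup.normalClosure R₀)
    (π₁ : FreeGroup X →* G₁) (hs₁ : Function.Surjective π₁)
    (hk₁ : π₁.ker = Subgroup.normalClosure (R₀ ∪ Rh))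
    (φ : G₀ →* G₁) (hφ : ∀ w : FreeGroup X, φ (π₀ w) = π₁ w)
    (hZ11 : Z11 Y R₀)
    (hZ12 : ∀ u : FreeGroup X, fYLen Y u = 0 → π₀ (u ^ n) = 1)
    (hZ32 : ∀ g : G₀, Essential Y π₀ g →
      (∀ h : G₁, yLen Y π₀ g ≤ yLen Y π₁ (h * φ g * h⁻¹)) →
      ∃ r : G₀, yLen Y π₀ r = 0 ∧ ∀ x ∈ OSub Y π₀ g, Commute (g * r⁻¹) x)
    (g : G₀) (hg : Essential Y π₀ g)
    (hgmin : ∀ h : G₁, yLen Y π₀ g ≤ yLen Y π₁ (h * φ g * h⁻¹))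
    (x : G₀) (hx : x ∈ OSub Y π₀ g) :
    (g * x) ^ n = g ^ n := by
  classical
  -- the `0`-subgroup `K = 0(g)` and basic facts about it
  set K := OSub Y π₀ g with hK
  have hgnorm : g ∈ Subgroup.normalizer (K : Set G₀) := mem_normalizer_OSub g
  have hginv : g⁻¹ ∈ Subgroup.normalizer (K : Set G₀) := (Subgroup.normalizer (K : Set G₀)).inv_mem hgnorm
  -- n-th powers of 0-elements are trivial
  have hpow : ∀ a : G₀, yLen Y π₀ a = 0 → a ^ n = 1 := by
    intro a ha
    obtain ⟨l, hl, h0⟩ := exists_of_yLen_zero hs₀ a ha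
    have hf : fYLen Y (FreeGroup.mk l) = 0 :=
      Nat.sInf_eq_zero.mpr (Or.inl ⟨l, rfl, h0⟩)
    have := hZ12 (FreeGroup.mk l) hf
    rwa [map_pow, hl] at this
  -- get the 0-element r from (Z3.2)
  obtain ⟨r, hr0, hrcomm⟩ := hZ32 g hg hgmin
  have hx0 : yLen Y π₀ x = 0 := yLen_zero_of_mem_OSub hs₀ g hx
  -- key: conjugation by g and by r agree on K
  have hconj : ∀ w ∈ K, g⁻¹ * w * g = r⁻¹ * w * r := by
    intro w hw
    have h : g * r⁻¹ * w = w * (g * r⁻¹) := hrcomm w hw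
    calc g⁻¹ * w * g = g⁻¹ * (w * (g * r⁻¹)) * r := by group
      _ = g⁻¹ * (g * r⁻¹ * w) * r := by rw [h]
      _ = r⁻¹ * w * r := by group
  -- the common "tail" of the powers of g*x and r*x
  have main : ∀ m : ℕ, ∃ w ∈ K, (g * x) ^ m = g ^ m * w ∧ (r * x) ^ m = r ^ m * w := by
    intro m
    induction m with
    | zero => exact ⟨1, one_mem _, by simp, by simp⟩
    | succ m ih =>
      obtain ⟨w, hwK, h1, h2⟩ := ih
      refine ⟨g⁻¹ * w * g * x, ?_, ?_, ?_⟩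
      · have : g⁻¹ * w * g ∈ K := by
          have := (Subgroup.mem_normalizer_iff.mp hginv w).mp hwK
          simpa [mul_assoc] using this
        exact mul_mem this hx
      · rw [pow_succ, pow_succ, h1]; group
      · rw [pow_succ, pow_succ, h2, hconj w hwK]; group
  obtain ⟨w, hwK, h1, h2⟩ := main n
  -- (r*x)^n = 1 and r^n = 1, hence w = 1
  have hrx : (r * x) ^ n = 1 := hpow _ (yLen_mul hs₀ hr0 hx0)
  have hrn : r ^ n = 1 := hpow _ hr0
  have hw : w = 1 := by
    have := h2
    rw [hrx, hrn, one_mul] at this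
    exact this.symm
  rw [h1, hw, mul_one]

end OlshanskiiSapir
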